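/- The stabilizer of E = [[0,-1],[0,0]] under the conjugation action of GL₂(ℤ) is the subgroup generated by U = [[1,1],[0,1]] and -I. -/

import Mathlib

/-- U = [[1,1],[0,1]] as an element of GL₂(ℤ). -/
def Ugl : GL (Fin 2) ℤ :=
  ⟨!![1, 1; 0, 1], !![1, -1; 0, 1],
    by ext i j; fin_cases i <;> fin_cases j <;>
      simp [Matrix.mul_apply, Fin.sum_univ_succ],
    by ext i j; fin_cases i <;> fin_cases j <;>
      simp [Matrix.mul_apply, Fin.sum_univ_succ]⟩

lemma Ugl_zpow (n : ℤ) :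
    ((Ugl ^ n : GL (Fin 2) ℤ) : Matrix (Fin 2) (Fin 2) ℤ) = !![1, n; 0, 1] := by
  induction n using Int.induction_on with
  | zero => ext i j; fin_cases i <;> fin_cases j <;> simp [Ugl]
  | succ k ih =>
      rw [zpow_add_one, Units.val_mul, ih]
      ext i j; fin_cases i <;> fin_cases j <;>
        simp [Ugl, Matrix.mul_apply, Fin.sum_univ_succ] <;> ring
  | pred k ih =>
      rw [zpow_sub_one, Units.val_mul, ih]
      have : ((Ugl⁻¹ : GL (Fin 2) ℤ) : Matrix (Fin 2) (Fin 2) ℤ) = !![1, -1; 0, 1] := rfl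
      rw [this]
      ext i j; fin_cases i <;> fin_cases j <;>
        simp [Matrix.mul_apply, Fin.sum_univ_succ]; ring

theorem stmt_16 (T : GL (Fin 2) ℤ) :
    (T : Matrix (Fin 2) (Fin 2) ℤ) * !![0, -1; 0, 0] *
        ((T⁻¹ : GL (Fin 2) ℤ) : Matrix (Fin 2) (Fin 2) ℤ) = !![0, -1; 0, 0] ↔
      T ∈ Subgroup.closure {Ugl, (-1 : GL (Fin 2) ℤ)} := by
  constructor
  · intro h
    -- turn into T E = E T
    have hc : (T : Matrix (Fin 2) (Fin 2) ℤ) * !![0, -1; 0, 0]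
        = !![0, -1; 0, 0] * (T : Matrix (Fin 2) (Fin 2) ℤ) := by
      have := congrArg (· * (T : Matrix (Fin 2) (Fin 2) ℤ)) h
      simpa [mul_assoc, Matrix.coe_units_inv, Units.inv_mul] using this
    have h10 : (T : Matrix (Fin 2) (Fin 2) ℤ) 1 0 = 0 := by
      have := congrFun (congrFun hc 0) 0
      simpa [Matrix.mul_apply, Fin.sum_univ_succ] using this
    have h00 : (T : Matrix (Fin 2) (Fin 2) ℤ) 0 0 = (T : Matrix (Fin 2) (Fin 2) ℤ) 1 1 := by
      have := congrFun (congrFun hc 0) 1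
      have h2 : -(T : Matrix (Fin 2) (Fin 2) ℤ) 0 0 = -(T : Matrix (Fin 2) (Fin 2) ℤ) 1 1 := by
        simpa [Matrix.mul_apply, Fin.sum_univ_succ] using this
      linarith
    have hdet : IsUnit ((T : Matrix (Fin 2) (Fin 2) ℤ).det) := by
      exact (Matrix.isUnit_iff_isUnit_det _).mp T.isUnit
    have hdet2 : (T : Matrix (Fin 2) (Fin 2) ℤ) 0 0 * (T : Matrix (Fin 2) (Fin 2) ℤ) 0 0
        = (T : Matrix (Fin 2) (Fin 2) ℤ).det := by
      rw [Matrix.det_fin_two, h10, h00]; ring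
    have ha : (T : Matrix (Fin 2) (Fin 2) ℤ) 0 0 = 1 ∨
        (T : Matrix (Fin 2) (Fin 2) ℤ) 0 0 = -1 := by
      rcases Int.isUnit_iff.mp hdet with h1 | h1
      · exact mul_self_eq_one_iff.mp (hdet2.trans h1)
      · exact absurd (hdet2.trans h1)
          (by nlinarith [mul_self_nonneg ((T : Matrix (Fin 2) (Fin 2) ℤ) 0 0)])
    have hU : Ugl ∈ Subgroup.closure {Ugl, (-1 : GL (Fin 2) ℤ)} :=
      Subgroup.subset_closure (Set.mem_insert _ _)
    have hN : (-1 : GL (Fin 2) ℤ) ∈ Subgroup.closure {Ugl, (-1 : GL (Fin 2) ℤ)} :=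
      Subgroup.subset_closure (Set.mem_insert_of_mem _ rfl)
    rcases ha with ha | ha
    · have : T = Ugl ^ ((T : Matrix (Fin 2) (Fin 2) ℤ) 0 1) := by
        apply Units.ext
        rw [Ugl_zpow]
        ext i j
        fin_cases i <;> fin_cases j <;> simp_all
      rw [this]
      exact Subgroup.zpow_mem _ hU _
    · have : T = (-1 : GL (Fin 2) ℤ) * Ugl ^ (-((T : Matrix (Fin 2) (Fin 2) ℤ) 0 1)) := by
        apply Units.ext
        rw [Units.val_mul, Ugl_zpow]
        ext i j
        fin_cases i <;> fin_cases j <;> simp_all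
      rw [this]
      exact Subgroup.mul_mem _ hN (Subgroup.zpow_mem _ hU _)
  · intro h
    induction h using Subgroup.closure_induction with
    | mem x hx =>
        rcases hx with hx | hx
        · subst hx
          have hinv : ((Ugl⁻¹ : GL (Fin 2) ℤ) : Matrix (Fin 2) (Fin 2) ℤ)
              = !![1, -1; 0, 1] := rfl
          have hval : ((Ugl : GL (Fin 2) ℤ) : Matrix (Fin 2) (Fin 2) ℤ)
              = !![1, 1; 0, 1] := rfl
          rw [hinv, hval]
          ext i j
          fin_cases i <;> fin_cases j <;>
            simp [Matrix.mul_apply, Fin.sum_univ_succ]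
        · simp only [Set.mem_singleton_iff] at hx
          subst hx
          simp
    | one => simp
    | mul a b _ _ iha ihb =>
        rw [mul_inv_rev, Units.val_mul, Units.val_mul]
        have key : (a : Matrix (Fin 2) (Fin 2) ℤ) * (b : Matrix (Fin 2) (Fin 2) ℤ) *
              !![0, -1; 0, 0] *
              (((b⁻¹ : GL (Fin 2) ℤ) : Matrix (Fin 2) (Fin 2) ℤ) *
                ((a⁻¹ : GL (Fin 2) ℤ) : Matrix (Fin 2) (Fin 2) ℤ))
            = (a : Matrix (Fin 2) (Fin 2) ℤ) *
              ((b : Matrix (Fin 2) (Fin 2) ℤ) * !![0, -1; 0, 0] *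
                ((b⁻¹ : GL (Fin 2) ℤ) : Matrix (Fin 2) (Fin 2) ℤ)) *
              ((a⁻¹ : GL (Fin 2) ℤ) : Matrix (Fin 2) (Fin 2) ℤ) := by
          simp only [mul_assoc]
        rw [key, ihb, iha]
    | inv a _ iha =>
        have := congrArg (fun M => ((a⁻¹ : GL (Fin 2) ℤ) : Matrix (Fin 2) (Fin 2) ℤ) * M *
          (a : Matrix (Fin 2) (Fin 2) ℤ)) iha
        rw [inv_inv, ← this]
        simp only [mul_assoc]
        simp [Units.inv_mul, Units.mul_inv]
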